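/- Let f : T₁ → T₂ be a chronological map between game trees with T₁ non-empty. Then f is locally surjective if and only if for every t ∈ T₁ there exists a chronological map g : T₂ → T₁ with f ∘ g = id_{T₂} and t in the image of g. -/

import Mathlib

open Classical

/-- A game tree over `M`: a set of finite sequences closed under truncation,
in which every element admits a one-step extension. -/
def IsGameTree {M : Type*} (T : Set (List M)) : Prop :=
  (∀ t ∈ T, ∀ k ≤ t.length, t.take k ∈ T) ∧ (∀ t ∈ T, ∃ x : M, t ++ [x] ∈ T)

/-- The initial segment of length `n` of an infinite sequence. -/
def runPre {M : Type*} (R : ℕ → M) (n : ℕ) : List M := List.ofFn fun i : Fin n => R i.1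

/-- The runs (branches) of a game tree. -/
def GameRun {M : Type*} (T : Set (List M)) : Set (ℕ → M) := {R | ∀ n : ℕ, runPre R n ∈ T}

/-- A chronological map between game trees: preserves length and truncation. -/
def IsChron {M N : Type*} (T₁ : Set (List M)) (T₂ : Set (List N))
    (f : List M → List N) : Prop :=
  (∀ t ∈ T₁, f t ∈ T₂) ∧ (∀ t ∈ T₁, (f t).length = t.length) ∧
    (∀ t ∈ T₁, ∀ k ≤ t.length, f (t.take k) = (f t).take k)

/-- A chronological map is locally surjective if it is locally surjective at every
moment `t`: every one-step extension of `f t` in `T₂` is the image of a one-step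
extension of `t` in `T₁` (and `T₂` is empty whenever `T₁` is). -/
def LocallySurjective {M N : Type*} (T₁ : Set (List M)) (T₂ : Set (List N))
    (f : List M → List N) : Prop :=
  (T₁ = ∅ → T₂ = ∅) ∧
    ∀ t ∈ T₁, ∀ y : N, f t ++ [y] ∈ T₂ →
      ∃ x : M, t ++ [x] ∈ T₁ ∧ f (t ++ [x]) = f t ++ [y]

theorem take_concat_getD' {α : Type*} [Inhabited α] (l : List α) (n : ℕ)
    (h : l.length = n + 1) : l = l.take n ++ [l.getD n default] := by
  have hn : n < l.length := by omega
  have h1 : l.take (n+1) = l := by rw [← h, List.take_length]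
  have h2 : l.take (n+1) = (l.take n).concat l[n] := (List.take_concat_get hn).symm
  rw [List.getD_eq_getElem l default hn]
  conv_lhs => rw [← h1, h2]
  simp

open scoped Classical in
noncomputable def secAux {M N : Type*} [Inhabited M] [Inhabited N]
    (T₁ : Set (List M)) (f : List M → List N) (t : List M) : ℕ → List N → List M
  | 0, _ => []
  | (n+1), s =>
    if n + 1 ≤ t.length ∧ s = (f t).take (n+1) then t.take (n+1)
    else
      secAux T₁ f t n (s.take n) ++
        [if h : ∃ x, secAux T₁ f t n (s.take n) ++ [x] ∈ T₁ ∧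
              f (secAux T₁ f t n (s.take n) ++ [x]) =
                f (secAux T₁ f t n (s.take n)) ++ [s.getD n default]
          then h.choose else default]

lemma secAux_spec {M N : Type*} [Inhabited M] [Inhabited N]
    (T₁ : Set (List M)) (T₂ : Set (List N))
    (h₁ : IsGameTree T₁) (h₂ : IsGameTree T₂)
    (f : List M → List N) (hf : IsChron T₁ T₂ f)
    (hLS : LocallySurjective T₁ T₂ f)
    (t : List M) (ht : t ∈ T₁) (hnil : ([] : List M) ∈ T₁) :
    ∀ n, ∀ s ∈ T₂, s.length = n →
      secAux T₁ f t n s ∈ T₁ ∧ f (secAux T₁ f t n s) = s ∧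
      ∀ k ≤ n, secAux T₁ f t k (s.take k) = (secAux T₁ f t n s).take k := by
  have hfnil : f [] = [] := by
    have := hf.2.1 [] hnil
    simpa using List.eq_nil_of_length_eq_zero (by simpa using this)
  intro n
  induction n with
  | zero =>
    intro s hs hlen
    have hs0 : s = [] := List.eq_nil_of_length_eq_zero hlen
    subst hs0
    refine ⟨by simpa [secAux] using hnil, by simpa [secAux] using hfnil, ?_⟩
    intro k hk
    interval_cases k
    simp [secAux]
  | succ n IH =>
    intro s hs hlen
    set s' := s.take n with hs'def
    have hs' : s' ∈ T₂ := h₂.1 s hs n (by omega)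
    have hs'len : s'.length = n := by simp [hs'def, hlen]
    obtain ⟨hg1, hg2, hg3⟩ := IH s' hs' hs'len
    have hglen : (secAux T₁ f t n s').length = n := by
      have := hf.2.1 _ hg1
      rw [hg2, hs'len] at this
      omega
    have hy : s = s' ++ [s.getD n default] := take_concat_getD' s n hlen
    by_cases hc : n + 1 ≤ t.length ∧ s = (f t).take (n+1)
    · have heq : secAux T₁ f t (n+1) s = t.take (n+1) := by
        rw [secAux, if_pos hc]
      have hmem : t.take (n+1) ∈ T₁ := h₁.1 t ht (n+1) hc.1
      have hfval : f (t.take (n+1)) = s := by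
        rw [hf.2.2 t ht (n+1) hc.1, ← hc.2]
      refine ⟨heq ▸ hmem, heq ▸ hfval, ?_⟩
      intro k hk
      have hkey : ∀ m ≤ n + 1, secAux T₁ f t m (s.take m) = t.take m := by
        intro m hm
        match m with
        | 0 => simp [secAux]
        | (m'+1) =>
          have hcond : m' + 1 ≤ t.length ∧ s.take (m'+1) = (f t).take (m'+1) := by
            constructor
            · omega
            · rw [hc.2, List.take_take]
              congr 1
              omega
          rw [secAux, if_pos hcond]
      rw [hkey k hk, heq, List.take_take]
      congr 1
      omega
    · have hex : ∃ x, secAux T₁ f t n s' ++ [x] ∈ T₁ ∧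
          f (secAux T₁ f t n s' ++ [x]) =
            f (secAux T₁ f t n s') ++ [s.getD n default] := by
        apply hLS.2 _ hg1
        rw [hg2, ← hy]
        exact hs
      have heq : secAux T₁ f t (n+1) s = secAux T₁ f t n s' ++ [hex.choose] := by
        rw [secAux, if_neg hc, dif_pos hex]
      have hmem := hex.choose_spec.1
      have hfval : f (secAux T₁ f t n s' ++ [hex.choose]) = s := by
        rw [hex.choose_spec.2, hg2, ← hy]
      refine ⟨heq ▸ hmem, heq ▸ hfval, ?_⟩
      intro k hk
      rcases Nat.lt_or_ge k (n+1) with hk' | hk'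
      · have hkn : k ≤ n := by omega
        have h1 : s.take k = s'.take k := by
          rw [hs'def, List.take_take]
          congr 1
          omega
        rw [h1, hg3 k hkn, heq, List.take_append_of_le_length (by omega)]
      · have hk1 : k = n + 1 := by omega
        subst hk1
        have h1 : s.take (n+1) = s := by
          rw [← hlen, List.take_length]
        have h2 : (secAux T₁ f t (n+1) s).length = n + 1 := by
          rw [heq]
          simp [hglen]
        rw [h1, List.take_of_length_le h2.le]

theorem locallySurjective_iff_sections {M N : Type*} (T₁ : Set (List M)) (T₂ : Set (List N))
    (h₁ : IsGameTree T₁) (h₂ : IsGameTree T₂) (hne : T₁.Nonempty)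
    (f : List M → List N) (hf : IsChron T₁ T₂ f) :
    LocallySurjective T₁ T₂ f ↔
      ∀ t ∈ T₁, ∃ g : List N → List M, IsChron T₂ T₁ g ∧
        (∀ s ∈ T₂, f (g s) = s) ∧ (∃ s ∈ T₂, g s = t) := by
  obtain ⟨t₀, ht₀⟩ := hne
  have hnil : ([] : List M) ∈ T₁ := by
    have := h₁.1 t₀ ht₀ 0 (Nat.zero_le _)
    simpa using this
  obtain ⟨x₀, hx₀⟩ := h₁.2 [] hnil
  haveI : Inhabited M := ⟨x₀⟩
  have hnil₂ : ([] : List N) ∈ T₂ := by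
    have h := hf.1 [] hnil
    have hl := hf.2.1 [] hnil
    simp at hl
    rwa [hl] at h
  obtain ⟨y₀, hy₀⟩ := h₂.2 [] hnil₂
  haveI : Inhabited N := ⟨y₀⟩
  constructor
  · intro hLS t ht
    have key := secAux_spec T₁ T₂ h₁ h₂ f hf hLS t ht hnil
    refine ⟨fun s => secAux T₁ f t s.length s, ⟨?_, ?_, ?_⟩, ?_, ?_⟩
    · intro s hs
      exact (key s.length s hs rfl).1
    · intro s hs
      show (secAux T₁ f t s.length s).length = s.length
      have := hf.2.1 _ (key s.length s hs rfl).1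
      rw [(key s.length s hs rfl).2.1] at this
      omega
    · intro s hs k hk
      show secAux T₁ f t (s.take k).length (s.take k) = (secAux T₁ f t s.length s).take k
      have h1 : (s.take k).length = k := by simp; omega
      rw [h1]
      exact (key s.length s hs rfl).2.2 k hk
    · intro s hs
      exact (key s.length s hs rfl).2.1
    · refine ⟨f t, hf.1 t ht, ?_⟩
      have hft : (f t).length = t.length := hf.2.1 t ht
      show secAux T₁ f t (f t).length (f t) = t
      rw [hft]
      cases htl : t.length with
      | zero =>
        have : t = [] := List.eq_nil_of_length_eq_zero htl
        simp [secAux, this]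
      | succ m =>
        have hcond : m + 1 ≤ t.length ∧ f t = (f t).take (m+1) := by
          refine ⟨by omega, ?_⟩
          rw [List.take_of_length_le (by omega)]
        rw [secAux, if_pos hcond, List.take_of_length_le (by omega)]
  · intro hsec
    constructor
    · intro hempty
      exact absurd (hempty ▸ ht₀) (Set.notMem_empty t₀)
    · intro t ht y hy
      obtain ⟨g, hg, hsect, s₀, hs₀, hgs₀⟩ := hsec t ht
      have hs₀eq : s₀ = f t := by rw [← hsect s₀ hs₀, hgs₀]
      have hgft : g (f t) = t := hs₀eq ▸ hgs₀
      set s := f t ++ [y] with hsdef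
      have hslen : s.length = t.length + 1 := by
        simp [hsdef, hf.2.1 t ht]
      have hgs : g s ∈ T₁ := hg.1 s hy
      have hfgs : f (g s) = s := hsect s hy
      have hgslen : (g s).length = t.length + 1 := by
        have := hf.2.1 _ hgs
        rw [hfgs] at this
        omega
      have htake : s.take t.length = f t := by
        rw [hsdef, List.take_append_of_le_length (le_of_eq (hf.2.1 t ht).symm),
          List.take_of_length_le (hf.2.1 t ht).le]
      have hpre : (g s).take t.length = t := by
        rw [← hg.2.2 s hy t.length (by omega), htake, hgft]
      have heq : g s = t ++ [(g s).getD t.length default] := by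
        conv_lhs => rw [take_concat_getD' (g s) t.length hgslen]
        rw [hpre]
      exact ⟨(g s).getD t.length default, heq ▸ hgs, by rw [← heq, hfgs]⟩
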